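/- arXiv:1402.2388 — 3 statements merged into one kernel-verified Lean document; each statement's English description precedes it below -/
import Mathlib

section
/- Let G₁ = {(s,t) : |s| < 1, 0 < t < 1}. For any ε > 0 and any u ∈ C¹(cl G₁) such that the Lebesgue measure of {(s,t) ∈ G₁ : u(s,t) = 0} is at least ε, one has ∫_{G₁} u² ds dt ≤ C_ε ∫_{G₁} (t u_t² + u_s²) ds dt, where C_ε depends only on ε. -/
open MeasureTheory

/-- Partial derivative in the first (s) variable. -/
noncomputable def pds (u : ℝ × ℝ → ℝ) (p : ℝ × ℝ) : ℝ :=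
  deriv (fun x => u (x, p.2)) p.1

/-- Partial derivative in the second (t) variable. -/
noncomputable def pdt (u : ℝ × ℝ → ℝ) (p : ℝ × ℝ) : ℝ :=
  deriv (fun y => u (p.1, y)) p.2

/-- The box `G₁ = (-1,1) × (0,1)`. -/
def G1 : Set (ℝ × ℝ) := Set.Ioo (-1 : ℝ) 1 ×ˢ Set.Ioo (0 : ℝ) 1

open Set

noncomputable def aPs (u : ℝ × ℝ → ℝ) (p : ℝ × ℝ) : ℝ := fderiv ℝ u p (1, 0)
noncomputable def aPt (u : ℝ × ℝ → ℝ) (p : ℝ × ℝ) : ℝ := fderiv ℝ u p (0, 1)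

lemma hG1open : IsOpen G1 := isOpen_Ioo.prod isOpen_Ioo
lemma hG1meas : MeasurableSet G1 := hG1open.measurableSet

lemma closure_G1 : closure G1 = Set.Icc (-1:ℝ) 1 ×ˢ Set.Icc (0:ℝ) 1 := by
  rw [G1, closure_prod_eq, closure_Ioo (by norm_num : (-1:ℝ) ≠ 1),
    closure_Ioo (by norm_num : (0:ℝ) ≠ 1)]

lemma compact_closure_G1 : IsCompact (closure G1) := by
  rw [closure_G1]; exact isCompact_Icc.prod isCompact_Icc

lemma volume_G1 : volume G1 = ENNReal.ofReal 2 := by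
  rw [G1, Measure.volume_eq_prod, Measure.prod_prod, Real.volume_Ioo, Real.volume_Ioo]
  rw [← ENNReal.ofReal_mul (by norm_num)]
  norm_num

section reg
variable {u : ℝ × ℝ → ℝ} (hu : ContDiffOn ℝ 1 u (closure G1))
include hu

lemma diffAt {p : ℝ × ℝ} (hp : p ∈ G1) : DifferentiableAt ℝ u p :=
  ((hu.mono subset_closure).differentiableOn one_ne_zero).differentiableAt
    (hG1open.mem_nhds hp)

lemma hasDerivAt_fst {p : ℝ × ℝ} (hp : p ∈ G1) :
    HasDerivAt (fun x => u (x, p.2)) (aPs u p) p.1 := by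
  have h1 : HasDerivAt (fun x : ℝ => (x, p.2)) ((1:ℝ), (0:ℝ)) p.1 :=
    (hasDerivAt_id p.1).prodMk (hasDerivAt_const p.1 p.2)
  exact ((diffAt hu hp).hasFDerivAt.comp_hasDerivAt p.1 h1)

lemma hasDerivAt_snd {p : ℝ × ℝ} (hp : p ∈ G1) :
    HasDerivAt (fun y => u (p.1, y)) (aPt u p) p.2 := by
  have h1 : HasDerivAt (fun y : ℝ => (p.1, y)) ((0:ℝ), (1:ℝ)) p.2 :=
    (hasDerivAt_const p.2 p.1).prodMk (hasDerivAt_id p.2)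
  exact ((diffAt hu hp).hasFDerivAt.comp_hasDerivAt p.2 h1)

lemma pds_eq {p : ℝ × ℝ} (hp : p ∈ G1) : pds u p = aPs u p :=
  (hasDerivAt_fst hu hp).deriv

lemma pdt_eq {p : ℝ × ℝ} (hp : p ∈ G1) : pdt u p = aPt u p :=
  (hasDerivAt_snd hu hp).deriv

lemma contPs : ContinuousOn (aPs u) G1 :=
  (((hu.mono subset_closure).continuousOn_fderiv_of_isOpen hG1open le_rfl).clm_apply
    continuousOn_const)

lemma contPt : ContinuousOn (aPt u) G1 :=
  (((hu.mono subset_closure).continuousOn_fderiv_of_isOpen hG1open le_rfl).clm_apply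
    continuousOn_const)

lemma exists_bound : ∃ M : ℝ, 0 ≤ M ∧ ∀ p ∈ G1, |u p| ≤ M ∧ |aPs u p| ≤ M ∧ |aPt u p| ≤ M := by
  have hud : UniqueDiffOn ℝ (closure G1) := by
    rw [closure_G1]
    exact (uniqueDiffOn_Icc (by norm_num)).prod (uniqueDiffOn_Icc (by norm_num))
  have hcf : ContinuousOn (fderivWithin ℝ u (closure G1)) (closure G1) :=
    hu.continuousOn_fderivWithin hud le_rfl
  obtain ⟨M1, hM1⟩ := compact_closure_G1.exists_bound_of_continuousOn hcf
  obtain ⟨M2, hM2⟩ := compact_closure_G1.exists_bound_of_continuousOn hu.continuousOn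
  refine ⟨max (max M1 M2) 0, le_max_right _ _, fun p hp => ?_⟩
  have hfw : fderivWithin ℝ u (closure G1) p = fderiv ℝ u p :=
    fderivWithin_of_mem_nhds (mem_nhds_iff.2 ⟨G1, subset_closure, hG1open, hp⟩)
  have hb : ‖fderiv ℝ u p‖ ≤ M1 := hfw ▸ hM1 p (subset_closure hp)
  have h10 : ‖((1:ℝ), (0:ℝ))‖ = 1 := by
    simp [Prod.norm_def]
  have h01 : ‖((0:ℝ), (1:ℝ))‖ = 1 := by
    simp [Prod.norm_def]
  refine ⟨?_, ?_, ?_⟩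
  · calc |u p| = ‖u p‖ := rfl
      _ ≤ M2 := hM2 p (subset_closure hp)
      _ ≤ _ := le_max_of_le_left (le_max_right _ _)
  · calc |aPs u p| = ‖fderiv ℝ u p ((1:ℝ), (0:ℝ))‖ := rfl
      _ ≤ ‖fderiv ℝ u p‖ * ‖((1:ℝ),(0:ℝ))‖ := (fderiv ℝ u p).le_opNorm _
      _ ≤ M1 := by rw [h10, mul_one]; exact hb
      _ ≤ _ := le_max_of_le_left (le_max_left _ _)
  · calc |aPt u p| = ‖fderiv ℝ u p ((0:ℝ), (1:ℝ))‖ := rfl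
      _ ≤ ‖fderiv ℝ u p‖ * ‖((0:ℝ),(1:ℝ))‖ := (fderiv ℝ u p).le_opNorm _
      _ ≤ M1 := by rw [h01, mul_one]; exact hb
      _ ≤ _ := le_max_of_le_left (le_max_left _ _)

end reg

lemma measPs (u : ℝ × ℝ → ℝ) : Measurable (aPs u) := measurable_fderiv_apply_const ℝ u _
lemma measPt (u : ℝ × ℝ → ℝ) : Measurable (aPt u) := measurable_fderiv_apply_const ℝ u _

noncomputable def aX (u : ℝ × ℝ → ℝ) (t : ℝ) : ℝ := ∫ σ in Set.Ioo (-1:ℝ) 1, aPs u (σ, t) ^ 2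
noncomputable def aW (u : ℝ × ℝ → ℝ) (s : ℝ) : ℝ := ∫ τ in Set.Ioo (0:ℝ) 1, τ * aPt u (s, τ) ^ 2

lemma aX_nonneg (u : ℝ × ℝ → ℝ) (t : ℝ) : 0 ≤ aX u t :=
  setIntegral_nonneg measurableSet_Ioo (fun _ _ => sq_nonneg _)

lemma aW_nonneg (u : ℝ × ℝ → ℝ) (s : ℝ) : 0 ≤ aW u s :=
  setIntegral_nonneg measurableSet_Ioo (fun τ hτ => mul_nonneg hτ.1.le (sq_nonneg _))

lemma log_le_rpow {t : ℝ} (ht : t ∈ Set.Ioo (0:ℝ) 1) : -Real.log t ≤ 2 * t ^ (-(1:ℝ)/2) := by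
  have ht0 : 0 < t := ht.1
  have hs : (0:ℝ) < t ^ ((1:ℝ)/2) := Real.rpow_pos_of_pos ht0 _
  have h1 : Real.log ((t ^ ((1:ℝ)/2))⁻¹) ≤ (t ^ ((1:ℝ)/2))⁻¹ - 1 :=
    Real.log_le_sub_one_of_pos (inv_pos.2 hs)
  rw [Real.log_inv, Real.log_rpow ht0] at h1
  have h2 : t ^ (-(1:ℝ)/2) = (t ^ ((1:ℝ)/2))⁻¹ := by
    rw [show (-(1:ℝ)/2) = -((1:ℝ)/2) by ring, Real.rpow_neg ht0.le]
  rw [h2]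
  nlinarith [inv_pos.2 hs]

lemma rpow_int : IntegrableOn (fun t : ℝ => 2 * t ^ (-(1:ℝ)/2)) (Set.Ioo (0:ℝ) 1) := by
  have h := intervalIntegral.intervalIntegrable_rpow' (a := 0) (b := 1)
    (r := -(1:ℝ)/2) (by norm_num)
  rw [intervalIntegrable_iff_integrableOn_Ioc_of_le (by norm_num)] at h
  exact (h.mono_set Set.Ioo_subset_Ioc_self).const_mul 2

lemma rpow_int_val : ∫ t in Set.Ioo (0:ℝ) 1, 2 * t ^ (-(1:ℝ)/2) = 4 := by
  rw [← integral_Ioc_eq_integral_Ioo, ← intervalIntegral.integral_of_le (by norm_num : (0:ℝ) ≤ 1),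
    intervalIntegral.integral_const_mul, integral_rpow (Or.inl (by norm_num))]
  rw [show (-(1:ℝ)/2 + 1) = (1:ℝ)/2 by ring]
  rw [Real.one_rpow, Real.zero_rpow (by norm_num)]
  norm_num

lemma log_integrable : IntegrableOn (fun t : ℝ => -Real.log t) (Set.Ioo (0:ℝ) 1) := by
  refine Integrable.mono' rpow_int
    (Real.measurable_log.neg.aestronglyMeasurable) ?_
  filter_upwards [ae_restrict_mem measurableSet_Ioo] with t ht
  rw [Real.norm_eq_abs, abs_of_nonneg (by
    have := Real.log_neg ht.1 ht.2; linarith)]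
  exact log_le_rpow ht

lemma log_integral_le : ∫ t in Set.Ioo (0:ℝ) 1, -Real.log t ≤ 4 := by
  rw [← rpow_int_val]
  exact setIntegral_mono_on log_integrable rpow_int measurableSet_Ioo
    (fun t ht => log_le_rpow ht)

lemma log_integral_nonneg : 0 ≤ ∫ t in Set.Ioo (0:ℝ) 1, -Real.log t :=
  setIntegral_nonneg measurableSet_Ioo (fun t ht => by
    have := Real.log_neg ht.1 ht.2; linarith)

section ftc
variable {u : ℝ × ℝ → ℝ} (hu : ContDiffOn ℝ 1 u (closure G1))
include hu

lemma ftc_s {s s' t : ℝ} (hs : s ∈ Set.Ioo (-1:ℝ) 1) (hs' : s' ∈ Set.Ioo (-1:ℝ) 1)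
    (ht : t ∈ Set.Ioo (0:ℝ) 1) :
    ∫ σ in s'..s, aPs u (σ, t) = u (s, t) - u (s', t) := by
  have hsub : Set.uIcc s' s ⊆ Set.Ioo (-1:ℝ) 1 := Set.ordConnected_Ioo.uIcc_subset hs' hs
  have h1 : ∀ σ ∈ Set.uIcc s' s, HasDerivAt (fun x => u (x, t)) (aPs u (σ, t)) σ :=
    fun σ hσ => hasDerivAt_fst hu (⟨hsub hσ, ht⟩ : (σ, t) ∈ G1)
  have h2 : IntervalIntegrable (fun σ => aPs u (σ, t)) volume s' s :=
    ContinuousOn.intervalIntegrable ((contPs hu).comp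
      ((continuous_id.prodMk continuous_const).continuousOn)
      (fun σ hσ => ⟨hsub hσ, ht⟩))
  exact intervalIntegral.integral_eq_sub_of_hasDerivAt h1 h2

lemma ftc_t {t t' s' : ℝ} (ht : t ∈ Set.Ioo (0:ℝ) 1) (ht' : t' ∈ Set.Ioo (0:ℝ) 1)
    (hs' : s' ∈ Set.Ioo (-1:ℝ) 1) :
    ∫ τ in t'..t, aPt u (s', τ) = u (s', t) - u (s', t') := by
  have hsub : Set.uIcc t' t ⊆ Set.Ioo (0:ℝ) 1 := Set.ordConnected_Ioo.uIcc_subset ht' ht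
  have h1 : ∀ τ ∈ Set.uIcc t' t, HasDerivAt (fun y => u (s', y)) (aPt u (s', τ)) τ :=
    fun τ hτ => hasDerivAt_snd hu (⟨hs', hsub hτ⟩ : (s', τ) ∈ G1)
  have h2 : IntervalIntegrable (fun τ => aPt u (s', τ)) volume t' t :=
    ContinuousOn.intervalIntegrable ((contPt hu).comp
      ((continuous_const.prodMk continuous_id).continuousOn)
      (fun τ hτ => ⟨hs', hsub hτ⟩))
  exact intervalIntegral.integral_eq_sub_of_hasDerivAt h1 h2

end ftc

/-- Cauchy–Schwarz for integrals of real functions. -/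
lemma my_cs {α : Type*} [MeasurableSpace α] {μ : Measure α} {f g : α → ℝ}
    (hfm : AEStronglyMeasurable f μ) (hgm : AEStronglyMeasurable g μ)
    (hf : Integrable (fun x => f x ^ 2) μ) (hg : Integrable (fun x => g x ^ 2) μ) :
    (∫ x, f x * g x ∂μ) ^ 2 ≤ (∫ x, f x ^ 2 ∂μ) * ∫ x, g x ^ 2 ∂μ := by
  have habs : ∀ (h : α → ℝ), (∫ x, |h x| ^ (2:ℝ) ∂μ) = ∫ x, h x ^ 2 ∂μ := by
    intro h
    refine integral_congr_ae (Filter.Eventually.of_forall fun x => ?_)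
    show |h x| ^ (2:ℝ) = h x ^ 2
    rw [show |h x| ^ (2:ℝ) = |h x| ^ ((2:ℕ):ℝ) by norm_num, Real.rpow_natCast, sq_abs]
  have h2 : (2:ℝ).HolderConjugate 2 := Real.HolderConjugate.two_two
  have hF : MemLp (fun x => |f x|) (ENNReal.ofReal 2) μ := by
    rw [show ENNReal.ofReal (2:ℝ) = 2 by simp]
    exact (memLp_two_iff_integrable_sq (by simpa [Real.norm_eq_abs] using hfm.norm)).2 (by simpa [sq_abs] using hf)
  have hG : MemLp (fun x => |g x|) (ENNReal.ofReal 2) μ := by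
    rw [show ENNReal.ofReal (2:ℝ) = 2 by simp]
    exact (memLp_two_iff_integrable_sq (by simpa [Real.norm_eq_abs] using hgm.norm)).2 (by simpa [sq_abs] using hg)
  have key := integral_mul_le_Lp_mul_Lq_of_nonneg h2
    (Filter.Eventually.of_forall fun x => abs_nonneg (f x))
    (Filter.Eventually.of_forall fun x => abs_nonneg (g x)) hF hG
  rw [habs f, habs g] at key
  have hA : 0 ≤ ∫ x, f x ^ 2 ∂μ := integral_nonneg fun x => sq_nonneg _
  have hB : 0 ≤ ∫ x, g x ^ 2 ∂μ := integral_nonneg fun x => sq_nonneg _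
  have step1 : |∫ x, f x * g x ∂μ| ≤ ∫ x, |f x| * |g x| ∂μ := by
    calc |∫ x, f x * g x ∂μ| ≤ ∫ x, ‖f x * g x‖ ∂μ := by
          rw [← Real.norm_eq_abs]
          exact norm_integral_le_integral_norm _
      _ = ∫ x, |f x| * |g x| ∂μ := by simp [Real.norm_eq_abs, abs_mul]
  have step2 : (∫ x, f x * g x ∂μ)^2
      ≤ ((∫ x, f x ^2 ∂μ)^((1:ℝ)/2) * (∫ x, g x ^2 ∂μ)^((1:ℝ)/2))^2 := by
    rw [← sq_abs (∫ x, f x * g x ∂μ)]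
    exact pow_le_pow_left₀ (abs_nonneg _) (le_trans step1 key) 2
  refine le_trans step2 (le_of_eq ?_)
  rw [mul_pow, ← Real.rpow_natCast ((∫ x, f x ^2 ∂μ)^((1:ℝ)/2)) 2,
      ← Real.rpow_natCast ((∫ x, g x ^2 ∂μ)^((1:ℝ)/2)) 2,
      ← Real.rpow_mul hA, ← Real.rpow_mul hB]
  norm_num

lemma bdd_int {α : Type*} [MeasurableSpace α] {μ : Measure α} {s : Set α} {f : α → ℝ}
    (hm : AEStronglyMeasurable f (μ.restrict s)) (hs : μ s ≠ ⊤) {K : ℝ}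
    (hb : ∀ᵐ x ∂(μ.restrict s), |f x| ≤ K) : IntegrableOn f s μ := by
  have : IsFiniteMeasure (μ.restrict s) :=
    ⟨by rw [Measure.restrict_apply_univ]; exact lt_top_iff_ne_top.2 hs⟩
  exact Integrable.mono' (integrable_const K) hm (by simpa [Real.norm_eq_abs] using hb)

lemma vol_Ioo_ne_top {a b : ℝ} : volume (Set.Ioo a b) ≠ ⊤ := by
  simp [Real.volume_Ioo]

lemma intPs2_line {u : ℝ × ℝ → ℝ} {M : ℝ} (hM : ∀ p ∈ G1, |aPs u p| ≤ M) {t : ℝ}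
    (ht : t ∈ Set.Ioo (0:ℝ) 1) :
    IntegrableOn (fun σ => aPs u (σ, t) ^ 2) (Set.Ioo (-1:ℝ) 1) := by
  refine bdd_int (K := M ^ 2)
    ((((measPs u).comp (measurable_id.prodMk measurable_const)).pow_const 2).aestronglyMeasurable)
    vol_Ioo_ne_top ?_
  filter_upwards [ae_restrict_mem measurableSet_Ioo] with σ hσ
  rw [abs_of_nonneg (sq_nonneg _), ← sq_abs]
  exact pow_le_pow_left₀ (abs_nonneg _) (hM (σ, t) ⟨hσ, ht⟩) 2

lemma intPt2w_line {u : ℝ × ℝ → ℝ} {M : ℝ} (hM : ∀ p ∈ G1, |aPt u p| ≤ M) {s : ℝ}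
    (hs : s ∈ Set.Ioo (-1:ℝ) 1) :
    IntegrableOn (fun τ => τ * aPt u (s, τ) ^ 2) (Set.Ioo (0:ℝ) 1) := by
  refine bdd_int (K := M ^ 2)
    ((measurable_id.mul (((measPt u).comp
      (measurable_const.prodMk measurable_id)).pow_const 2)).aestronglyMeasurable)
    vol_Ioo_ne_top ?_
  filter_upwards [ae_restrict_mem measurableSet_Ioo] with τ hτ
  have h1 := hM (s, τ) ⟨hs, hτ⟩
  have h2 : aPt u (s, τ) ^ 2 ≤ M ^ 2 := by
    rw [← sq_abs]; exact pow_le_pow_left₀ (abs_nonneg _) h1 2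
  rw [abs_of_nonneg (mul_nonneg hτ.1.le (sq_nonneg _))]
  nlinarith [sq_nonneg (aPt u (s, τ)), hτ.1.le, hτ.2.le]

lemma bound_A' {u : ℝ × ℝ → ℝ} {M : ℝ} (hM : ∀ p ∈ G1, |aPs u p| ≤ M) {a b t : ℝ}
    (ha : a ∈ Set.Ioo (-1:ℝ) 1) (hb : b ∈ Set.Ioo (-1:ℝ) 1) (hab : a ≤ b)
    (ht : t ∈ Set.Ioo (0:ℝ) 1) :
    (∫ σ in a..b, aPs u (σ, t)) ^ 2 ≤ 2 * aX u t := by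
  have hIoosub : Set.Ioo a b ⊆ Set.Ioo (-1:ℝ) 1 :=
    fun σ hσ => ⟨lt_trans ha.1 hσ.1, lt_trans hσ.2 hb.2⟩
  have hint : IntegrableOn (fun σ => aPs u (σ, t) ^ 2) (Set.Ioo (-1:ℝ) 1) := intPs2_line hM ht
  have hint' : IntegrableOn (fun σ => aPs u (σ, t) ^ 2) (Set.Ioo a b) := hint.mono_set hIoosub
  rw [intervalIntegral.integral_of_le hab, integral_Ioc_eq_integral_Ioo]
  have hmeas : AEStronglyMeasurable (fun σ => aPs u (σ, t)) (volume.restrict (Set.Ioo a b)) :=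
    ((measPs u).comp (measurable_id.prodMk measurable_const)).aestronglyMeasurable
  have hone : Integrable (fun _ : ℝ => (1:ℝ) ^ 2) (volume.restrict (Set.Ioo a b)) := by
    simp only [one_pow]
    exact integrableOn_const vol_Ioo_ne_top
  have hcs := my_cs (μ := volume.restrict (Set.Ioo a b)) hmeas aestronglyMeasurable_const hint' hone
  simp only [mul_one, one_pow] at hcs
  have h1 : ∫ _σ in Set.Ioo a b, (1:ℝ) = b - a := by
    simp [Real.volume_Ioo, hab, ENNReal.toReal_ofReal (by linarith : (0:ℝ) ≤ b - a)]
  rw [h1] at hcs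
  have h2 : ∫ σ in Set.Ioo a b, aPs u (σ, t) ^ 2 ≤ aX u t :=
    setIntegral_mono_set hint
      (by filter_upwards with σ using sq_nonneg _)
      (HasSubset.Subset.eventuallyLE hIoosub)
  have h3 : 0 ≤ ∫ σ in Set.Ioo a b, aPs u (σ, t) ^ 2 :=
    setIntegral_nonneg measurableSet_Ioo fun _ _ => sq_nonneg _
  have hba : b - a ≤ 2 := by
    have := ha.1; have := hb.2; linarith
  calc (∫ σ in Set.Ioo a b, aPs u (σ, t)) ^ 2
      ≤ (∫ σ in Set.Ioo a b, aPs u (σ, t) ^ 2) * (b - a) := hcs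
    _ ≤ aX u t * 2 := mul_le_mul h2 hba (by linarith [ha.1, hb.2, ha.2, hb.1]) (aX_nonneg u t)
    _ = 2 * aX u t := mul_comm _ _

lemma bound_B' {u : ℝ × ℝ → ℝ} {M : ℝ} (hM : ∀ p ∈ G1, |aPt u p| ≤ M) {a b s' : ℝ}
    (ha : a ∈ Set.Ioo (0:ℝ) 1) (hb : b ∈ Set.Ioo (0:ℝ) 1) (hab : a ≤ b)
    (hs' : s' ∈ Set.Ioo (-1:ℝ) 1) :
    (∫ τ in a..b, aPt u (s', τ)) ^ 2 ≤ (-Real.log a) * aW u s' := by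
  have ha0 : 0 < a := ha.1
  have hb0 : 0 < b := lt_of_lt_of_le ha0 hab
  have hIoosub : Set.Ioo a b ⊆ Set.Ioo (0:ℝ) 1 :=
    fun τ hτ => ⟨lt_trans ha0 hτ.1, lt_trans hτ.2 hb.2⟩
  rw [intervalIntegral.integral_of_le hab, integral_Ioc_eq_integral_Ioo]
  have hae : ∀ᵐ τ ∂(volume.restrict (Set.Ioo a b)), τ ∈ Set.Ioo a b :=
    ae_restrict_mem measurableSet_Ioo
  have hfm : AEStronglyMeasurable (fun τ : ℝ => (Real.sqrt τ)⁻¹)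
      (volume.restrict (Set.Ioo a b)) :=
    (Real.continuous_sqrt.measurable.inv).aestronglyMeasurable
  have hgm : AEStronglyMeasurable (fun τ : ℝ => Real.sqrt τ * aPt u (s', τ))
      (volume.restrict (Set.Ioo a b)) :=
    (Real.continuous_sqrt.measurable.mul ((measPt u).comp
      (measurable_const.prodMk measurable_id))).aestronglyMeasurable
  have hf2 : Integrable (fun τ : ℝ => ((Real.sqrt τ)⁻¹) ^ 2)
      (volume.restrict (Set.Ioo a b)) := by
    refine bdd_int (K := ((Real.sqrt a)⁻¹) ^ 2)
      ((Real.continuous_sqrt.measurable.inv.pow_const 2).aestronglyMeasurable)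
      vol_Ioo_ne_top ?_
    filter_upwards [hae] with τ hτ
    have h2 : 0 < Real.sqrt a := Real.sqrt_pos.2 ha0
    rw [abs_of_nonneg (sq_nonneg _)]
    gcongr
    exact hτ.1.le
  have hg2 : Integrable (fun τ : ℝ => (Real.sqrt τ * aPt u (s', τ)) ^ 2)
      (volume.restrict (Set.Ioo a b)) := by
    refine bdd_int (K := M ^ 2)
      (((Real.continuous_sqrt.measurable.mul ((measPt u).comp
        (measurable_const.prodMk measurable_id))).pow_const 2).aestronglyMeasurable)
      vol_Ioo_ne_top ?_
    filter_upwards [hae] with τ hτ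
    have hτ0 : 0 ≤ τ := (lt_trans ha0 hτ.1).le
    have h1 := hM (s', τ) ⟨hs', hIoosub hτ⟩
    have h2 : aPt u (s', τ) ^ 2 ≤ M ^ 2 := by
      rw [← sq_abs]; exact pow_le_pow_left₀ (abs_nonneg _) h1 2
    rw [abs_of_nonneg (sq_nonneg _), mul_pow, Real.sq_sqrt hτ0]
    have hτ1 : τ ≤ 1 := (hIoosub hτ).2.le
    nlinarith [sq_nonneg (aPt u (s', τ))]
  have hcs := my_cs hfm hgm hf2 hg2
  have hEq : (∫ τ in Set.Ioo a b, aPt u (s', τ))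
      = ∫ τ in Set.Ioo a b, (Real.sqrt τ)⁻¹ * (Real.sqrt τ * aPt u (s', τ)) := by
    refine setIntegral_congr_fun measurableSet_Ioo (fun τ hτ => ?_)
    rw [← mul_assoc, inv_mul_cancel₀ (ne_of_gt (Real.sqrt_pos.2 (lt_trans ha0 hτ.1))), one_mul]
  have hf2eq : (∫ τ in Set.Ioo a b, ((Real.sqrt τ)⁻¹) ^ 2) = ∫ τ in Set.Ioo a b, τ⁻¹ := by
    refine setIntegral_congr_fun measurableSet_Ioo (fun τ hτ => ?_)
    rw [inv_pow, Real.sq_sqrt (lt_trans ha0 hτ.1).le]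
  have hg2eq : (∫ τ in Set.Ioo a b, (Real.sqrt τ * aPt u (s', τ)) ^ 2)
      = ∫ τ in Set.Ioo a b, τ * aPt u (s', τ) ^ 2 := by
    refine setIntegral_congr_fun measurableSet_Ioo (fun τ hτ => ?_)
    rw [mul_pow, Real.sq_sqrt (lt_trans ha0 hτ.1).le]
  have hinv : (∫ τ in Set.Ioo a b, τ⁻¹) ≤ -Real.log a := by
    rw [← integral_Ioc_eq_integral_Ioo, ← intervalIntegral.integral_of_le hab,
      integral_inv (by rw [Set.uIcc_of_le hab]; rintro ⟨h0, _⟩; linarith)]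
    rw [Real.log_div (ne_of_gt hb0) (ne_of_gt ha0)]
    have := Real.log_nonpos hb0.le hb.2.le
    linarith
  have hW : (∫ τ in Set.Ioo a b, τ * aPt u (s', τ) ^ 2) ≤ aW u s' := by
    refine setIntegral_mono_set (intPt2w_line hM hs') ?_
      (HasSubset.Subset.eventuallyLE hIoosub)
    filter_upwards [ae_restrict_mem measurableSet_Ioo] with τ hτ
    exact mul_nonneg hτ.1.le (sq_nonneg _)
  have h0g : 0 ≤ ∫ τ in Set.Ioo a b, τ * aPt u (s', τ) ^ 2 :=
    setIntegral_nonneg measurableSet_Ioo fun τ hτ => mul_nonneg (lt_trans ha0 hτ.1).le (sq_nonneg _)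
  have hloga : 0 ≤ -Real.log a := by
    have := Real.log_neg ha0 ha.2; linarith
  rw [hEq]
  refine le_trans hcs ?_
  rw [hf2eq, hg2eq]
  exact mul_le_mul hinv hW h0g hloga

lemma measW (u : ℝ × ℝ → ℝ) : Measurable (aW u) := by
  have hF : StronglyMeasurable fun z : ℝ × ℝ =>
      Set.indicator (Set.univ ×ˢ Set.Ioo (0:ℝ) 1) (fun z : ℝ × ℝ => z.2 * aPt u z ^ 2) z :=
    ((measurable_snd.mul ((measPt u).pow_const 2)).indicator
      (MeasurableSet.univ.prod measurableSet_Ioo)).stronglyMeasurable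
  have h2 := hF.integral_prod_right' (ν := volume)
  have heq : aW u = fun s => ∫ τ, Set.indicator (Set.univ ×ˢ Set.Ioo (0:ℝ) 1)
      (fun z : ℝ × ℝ => z.2 * aPt u z ^ 2) (s, τ) := by
    funext s
    rw [aW, ← integral_indicator measurableSet_Ioo]
    congr 1
    funext τ
    by_cases h : τ ∈ Set.Ioo (0:ℝ) 1
    · rw [Set.indicator_of_mem h, Set.indicator_of_mem (by exact ⟨trivial, h⟩)]
    · rw [Set.indicator_of_notMem h, Set.indicator_of_notMem (by simp [h])]
  rw [heq]
  exact h2.measurable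

lemma measX (u : ℝ × ℝ → ℝ) : Measurable (aX u) := by
  have hF : StronglyMeasurable fun z : ℝ × ℝ =>
      Set.indicator (Set.univ ×ˢ Set.Ioo (-1:ℝ) 1)
        (fun z : ℝ × ℝ => aPs u (z.2, z.1) ^ 2) z :=
    ((((measPs u).comp measurable_swap).pow_const 2).indicator
      (MeasurableSet.univ.prod measurableSet_Ioo)).stronglyMeasurable
  have h2 := hF.integral_prod_right' (ν := volume)
  have heq : aX u = fun t => ∫ σ, Set.indicator (Set.univ ×ˢ Set.Ioo (-1:ℝ) 1)
      (fun z : ℝ × ℝ => aPs u (z.2, z.1) ^ 2) (t, σ) := by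
    funext t
    rw [aX, ← integral_indicator measurableSet_Ioo]
    congr 1
    funext σ
    by_cases h : σ ∈ Set.Ioo (-1:ℝ) 1
    · rw [Set.indicator_of_mem h, Set.indicator_of_mem (by exact ⟨trivial, h⟩)]
    · rw [Set.indicator_of_notMem h, Set.indicator_of_notMem (by simp [h])]
  rw [heq]
  exact h2.measurable

lemma neg_log_nonneg {t : ℝ} (ht : t ∈ Set.Ioo (0:ℝ) 1) : 0 ≤ -Real.log t := by
  have := Real.log_neg ht.1 ht.2; linarith

lemma key_ineq {u : ℝ × ℝ → ℝ} {M : ℝ} (hu : ContDiffOn ℝ 1 u (closure G1))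
    (hMs : ∀ p ∈ G1, |aPs u p| ≤ M) (hMt : ∀ p ∈ G1, |aPt u p| ≤ M)
    {p q : ℝ × ℝ} (hp : p ∈ G1) (hq : q ∈ G1) :
    u p ^ 2 ≤ 3 * u q ^ 2 + 6 * aX u p.2
      + 3 * ((-Real.log q.2) + (-Real.log p.2)) * aW u q.1 := by
  obtain ⟨s, t⟩ := p
  obtain ⟨s', t'⟩ := q
  obtain ⟨hs, ht⟩ := hp
  obtain ⟨hs', ht'⟩ := hq
  dsimp only at hs ht hs' ht' ⊢
  have hA := ftc_s hu hs hs' ht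
  have hB := ftc_t hu ht ht' hs'
  have hA2 : (u (s, t) - u (s', t)) ^ 2 ≤ 2 * aX u t := by
    rw [← hA]
    rcases le_total s' s with h | h
    · exact bound_A' hMs hs' hs h ht
    · rw [intervalIntegral.integral_symm, Even.neg_pow even_two]
      exact bound_A' hMs hs hs' h ht
  have hW0 := aW_nonneg u s'
  have hB2 : (u (s', t) - u (s', t')) ^ 2 ≤ ((-Real.log t') + (-Real.log t)) * aW u s' := by
    rw [← hB]
    rcases le_total t' t with h | h
    · refine le_trans (bound_B' hMt ht' ht h hs') ?_
      have h2 := neg_log_nonneg ht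
      nlinarith
    · rw [intervalIntegral.integral_symm, Even.neg_pow even_two]
      refine le_trans (bound_B' hMt ht ht' h hs') ?_
      have h2 := neg_log_nonneg ht'
      nlinarith
  nlinarith [sq_nonneg (u (s', t') - (u (s', t) - u (s', t'))),
    sq_nonneg (u (s', t') - (u (s, t) - u (s', t))),
    sq_nonneg ((u (s', t) - u (s', t')) - (u (s, t) - u (s', t)))]

lemma restrict_G1 : (volume : Measure (ℝ × ℝ)).restrict G1
    = ((volume : Measure ℝ).restrict (Set.Ioo (-1:ℝ) 1)).prod
      ((volume : Measure ℝ).restrict (Set.Ioo (0:ℝ) 1)) := by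
  rw [Measure.prod_restrict, ← Measure.volume_eq_prod]
  rfl
set_option maxHeartbeats 1000000

/-- Weighted Poincaré inequality: if `u ∈ C¹(cl G₁)` vanishes on a subset of `G₁` of
measure at least `ε`, then `∫_{G₁} u² ≤ C_ε ∫_{G₁} (t u_t² + u_s²)`. -/
theorem stmt1 (ε : ℝ) (hε : 0 < ε) :
    ∃ C : ℝ, 0 < C ∧
      ∀ u : ℝ × ℝ → ℝ, ContDiffOn ℝ 1 u (closure G1) →
        ENNReal.ofReal ε ≤ volume {p ∈ G1 | u p = 0} →
        ∫ p in G1, (u p) ^ 2 ≤ C * ∫ p in G1, (p.2 * (pdt u p) ^ 2 + (pds u p) ^ 2) := by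
  refine ⟨48 / ε, by positivity, ?_⟩
  intro u hu hZle
  obtain ⟨M, hM0, hM⟩ := exists_bound hu
  have hMu : ∀ p ∈ G1, |u p| ≤ M := fun p hp => (hM p hp).1
  have hMs : ∀ p ∈ G1, |aPs u p| ≤ M := fun p hp => (hM p hp).2.1
  have hMt : ∀ p ∈ G1, |aPt u p| ≤ M := fun p hp => (hM p hp).2.2
  have hucont : ContinuousOn u G1 := hu.continuousOn.mono subset_closure
  set Z := {p ∈ G1 | u p = 0} with hZdef
  have hZsub : Z ⊆ G1 := fun p hp => hp.1
  have hZmeas : MeasurableSet Z := by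
    obtain ⟨O, hO, hOeq⟩ := (continuousOn_iff'.1 hucont) {(0:ℝ)}ᶜ isOpen_compl_singleton
    have hZeq : Z = G1 \ (O ∩ G1) := by
      ext p
      have hp := Set.ext_iff.1 hOeq p
      simp only [Set.mem_inter_iff, Set.mem_preimage, Set.mem_compl_iff,
        Set.mem_singleton_iff] at hp
      simp only [hZdef, Set.mem_setOf_eq, Set.mem_diff, Set.mem_inter_iff]
      constructor
      · rintro ⟨h1, h2⟩
        exact ⟨h1, fun hcon => (hp.2 ⟨hcon.1, h1⟩).1 h2⟩
      · rintro ⟨h1, h2⟩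
        exact ⟨h1, by_contra fun h3 => h2 ⟨(hp.1 ⟨h3, h1⟩).1, h1⟩⟩
    rw [hZeq]
    exact hG1meas.diff (hO.measurableSet.inter hG1meas)
  have hvolG1fin : volume G1 ≠ ⊤ := by rw [volume_G1]; exact ENNReal.ofReal_ne_top
  have hZfin : volume Z ≠ ⊤ := ne_top_of_le_ne_top hvolG1fin (measure_mono hZsub)
  set m := (volume Z).toReal with hmdef
  have hmε : ε ≤ m := by
    have h := ENNReal.toReal_mono hZfin hZle
    rwa [ENNReal.toReal_ofReal hε.le] at h
  have hm0 : 0 < m := lt_of_lt_of_le hε hmε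
  have haeG1 : ∀ᵐ q ∂(volume.restrict G1), q ∈ G1 := ae_restrict_mem hG1meas
  have hsq_le : ∀ x : ℝ, |x| ≤ M → x ^ 2 ≤ M ^ 2 := fun x hx => by
    rw [← sq_abs]; exact pow_le_pow_left₀ (abs_nonneg _) hx 2
  have hIu2 : IntegrableOn (fun q => u q ^ 2) G1 := by
    refine bdd_int (K := M ^ 2) ((hucont.pow 2).aestronglyMeasurable hG1meas) hvolG1fin ?_
    filter_upwards [haeG1] with q hq
    rw [abs_of_nonneg (sq_nonneg _)]; exact hsq_le _ (hMu q hq)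
  have hIPs2 : IntegrableOn (fun q => aPs u q ^ 2) G1 := by
    refine bdd_int (K := M ^ 2) (((measPs u).pow_const 2).aestronglyMeasurable) hvolG1fin ?_
    filter_upwards [haeG1] with q hq
    rw [abs_of_nonneg (sq_nonneg _)]; exact hsq_le _ (hMs q hq)
  have hIPt2w : IntegrableOn (fun q => q.2 * aPt u q ^ 2) G1 := by
    refine bdd_int (K := M ^ 2)
      ((measurable_snd.mul ((measPt u).pow_const 2)).aestronglyMeasurable) hvolG1fin ?_
    filter_upwards [haeG1] with q hq
    have h1 := hsq_le _ (hMt q hq)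
    have h2 : 0 < q.2 := hq.2.1
    have h3 : q.2 < 1 := hq.2.2
    rw [abs_of_nonneg (mul_nonneg h2.le (sq_nonneg _))]
    nlinarith [sq_nonneg (aPt u q)]
  set EW := ∫ s in Set.Ioo (-1:ℝ) 1, aW u s with hEWdef
  set EX := ∫ t in Set.Ioo (0:ℝ) 1, aX u t with hEXdef
  have hEW0 : 0 ≤ EW := setIntegral_nonneg measurableSet_Ioo fun s _ => aW_nonneg u s
  have hEX0 : 0 ≤ EX := setIntegral_nonneg measurableSet_Ioo fun t _ => aX_nonneg u t
  have hWle : ∀ s ∈ Set.Ioo (-1:ℝ) 1, aW u s ≤ M ^ 2 := by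
    intro s hs
    have h1 : aW u s ≤ ∫ _τ in Set.Ioo (0:ℝ) 1, M ^ 2 := by
      refine setIntegral_mono_on (intPt2w_line hMt hs)
        (integrableOn_const vol_Ioo_ne_top)
        measurableSet_Ioo ?_
      intro τ hτ
      have h2 := hsq_le _ (hMt (s, τ) ⟨hs, hτ⟩)
      nlinarith [sq_nonneg (aPt u (s, τ)), hτ.1.le, hτ.2.le]
    rw [setIntegral_const, measureReal_def, Real.volume_Ioo] at h1
    rw [show (1:ℝ) - 0 = 1 by norm_num] at h1
    simpa using h1
  have hXle : ∀ t ∈ Set.Ioo (0:ℝ) 1, aX u t ≤ 2 * M ^ 2 := by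
    intro t ht
    have h1 : aX u t ≤ ∫ _σ in Set.Ioo (-1:ℝ) 1, M ^ 2 := by
      refine setIntegral_mono_on (intPs2_line hMs ht)
        (integrableOn_const vol_Ioo_ne_top)
        measurableSet_Ioo ?_
      intro σ hσ
      exact hsq_le _ (hMs (σ, t) ⟨hσ, ht⟩)
    rw [setIntegral_const, measureReal_def, Real.volume_Ioo] at h1
    rw [show (1:ℝ) - -1 = 2 by norm_num] at h1
    rw [ENNReal.toReal_ofReal (by norm_num : (0:ℝ) ≤ 2)] at h1
    simpa [smul_eq_mul] using h1
  have hIW : IntegrableOn (aW u) (Set.Ioo (-1:ℝ) 1) := by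
    refine bdd_int (K := M ^ 2) (measW u).aestronglyMeasurable vol_Ioo_ne_top ?_
    filter_upwards [ae_restrict_mem measurableSet_Ioo] with s hs
    rw [abs_of_nonneg (aW_nonneg u s)]; exact hWle s hs
  have hIX : IntegrableOn (aX u) (Set.Ioo (0:ℝ) 1) := by
    refine bdd_int (K := 2 * M ^ 2) (measX u).aestronglyMeasurable vol_Ioo_ne_top ?_
    filter_upwards [ae_restrict_mem measurableSet_Ioo] with t ht
    rw [abs_of_nonneg (aX_nonneg u t)]; exact hXle t ht
  set Λ := ∫ t in Set.Ioo (0:ℝ) 1, -Real.log t with hΛdef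
  have hΛ0 : 0 ≤ Λ := log_integral_nonneg
  have hΛ4 : Λ ≤ 4 := log_integral_le
  have hone1 : Integrable (fun _ : ℝ => (1:ℝ)) (volume.restrict (Set.Ioo (-1:ℝ) 1)) :=
    integrableOn_const vol_Ioo_ne_top
  have hone2 : Integrable (fun _ : ℝ => (1:ℝ)) (volume.restrict (Set.Ioo (0:ℝ) 1)) :=
    integrableOn_const vol_Ioo_ne_top
  have hIWL : IntegrableOn (fun q : ℝ × ℝ => aW u q.1 * (-Real.log q.2)) G1 := by
    rw [IntegrableOn, restrict_G1]
    exact hIW.mul_prod log_integrable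
  have hIW1 : IntegrableOn (fun q : ℝ × ℝ => aW u q.1) G1 := by
    rw [IntegrableOn, restrict_G1]
    simpa using hIW.mul_prod hone2
  have hIXq : IntegrableOn (fun q : ℝ × ℝ => aX u q.2) G1 := by
    rw [IntegrableOn, restrict_G1]
    simpa using hone1.mul_prod hIX
  have hILq : IntegrableOn (fun q : ℝ × ℝ => -Real.log q.2) G1 := by
    rw [IntegrableOn, restrict_G1]
    simpa using hone1.mul_prod log_integrable
  have hint1 : (∫ _τ in Set.Ioo (0:ℝ) 1, (1:ℝ)) = 1 := by
    rw [setIntegral_const, measureReal_def, Real.volume_Ioo]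
    simp
  have hint2 : (∫ _σ in Set.Ioo (-1:ℝ) 1, (1:ℝ)) = 2 := by
    rw [setIntegral_const, measureReal_def, Real.volume_Ioo]
    rw [show (1:ℝ) - -1 = 2 by norm_num, ENNReal.toReal_ofReal (by norm_num : (0:ℝ) ≤ 2)]
    simp
  have hWLval : (∫ q in G1, aW u q.1 * (-Real.log q.2)) = EW * Λ := by
    show (∫ q in (Set.Ioo (-1:ℝ) 1) ×ˢ (Set.Ioo (0:ℝ) 1),
      aW u q.1 * (-Real.log q.2)) = EW * Λ
    rw [Measure.volume_eq_prod]
    exact setIntegral_prod_mul (fun s => aW u s) (fun t => -Real.log t) _ _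
  have hW1val : (∫ q in G1, aW u q.1) = EW := by
    have h1 : (∫ q in G1, aW u q.1) = ∫ q in G1, aW u q.1 * 1 := by simp
    rw [h1]
    show (∫ q in (Set.Ioo (-1:ℝ) 1) ×ˢ (Set.Ioo (0:ℝ) 1),
      aW u q.1 * (fun _ : ℝ => (1:ℝ)) q.2) = EW
    rw [Measure.volume_eq_prod,
      setIntegral_prod_mul (fun s => aW u s) (fun _ : ℝ => (1:ℝ)) _ _, hint1, mul_one]
  have hXval : (∫ q in G1, aX u q.2) = 2 * EX := by
    have h1 : (∫ q in G1, aX u q.2) = ∫ q in G1, (fun _ : ℝ => (1:ℝ)) q.1 * aX u q.2 := by simp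
    rw [h1]
    show (∫ q in (Set.Ioo (-1:ℝ) 1) ×ˢ (Set.Ioo (0:ℝ) 1),
      (fun _ : ℝ => (1:ℝ)) q.1 * aX u q.2) = 2 * EX
    rw [Measure.volume_eq_prod,
      setIntegral_prod_mul (fun _ : ℝ => (1:ℝ)) (fun t => aX u t) _ _, hint2]
  have hLval : (∫ q in G1, -Real.log q.2) = 2 * Λ := by
    have h1 : (∫ q in G1, -Real.log q.2)
        = ∫ q in G1, (fun _ : ℝ => (1:ℝ)) q.1 * (-Real.log q.2) := by simp
    rw [h1]
    show (∫ q in (Set.Ioo (-1:ℝ) 1) ×ˢ (Set.Ioo (0:ℝ) 1),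
      (fun _ : ℝ => (1:ℝ)) q.1 * (-Real.log q.2)) = 2 * Λ
    rw [Measure.volume_eq_prod,
      setIntegral_prod_mul (fun _ : ℝ => (1:ℝ)) (fun t => -Real.log t) _ _, hint2]
  have hEWet : (∫ q in G1, q.2 * aPt u q ^ 2) = EW := by
    show (∫ q, q.2 * aPt u q ^ 2 ∂((volume : Measure (ℝ × ℝ)).restrict G1)) = EW
    rw [restrict_G1]
    rw [MeasureTheory.integral_prod _ (by rw [← restrict_G1]; exact hIPt2w)]
    rfl
  have hEXes : (∫ q in G1, aPs u q ^ 2) = EX := by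
    have hint : Integrable (fun z : ℝ × ℝ => aPs u z ^ 2)
        ((volume.restrict (Set.Ioo (-1:ℝ) 1)).prod (volume.restrict (Set.Ioo (0:ℝ) 1))) := by
      rw [← restrict_G1]; exact hIPs2
    have hsw := MeasureTheory.integral_integral_swap
      (f := fun x y => aPs u (x, y) ^ 2)
      (μ := volume.restrict (Set.Ioo (-1:ℝ) 1)) (ν := volume.restrict (Set.Ioo (0:ℝ) 1))
      hint
    calc (∫ q in G1, aPs u q ^ 2)
        = ∫ q, aPs u q ^ 2 ∂((volume.restrict (Set.Ioo (-1:ℝ) 1)).prod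
            (volume.restrict (Set.Ioo (0:ℝ) 1))) := by rw [← restrict_G1]
      _ = ∫ x in Set.Ioo (-1:ℝ) 1, ∫ y in Set.Ioo (0:ℝ) 1, aPs u (x, y) ^ 2 :=
          MeasureTheory.integral_prod _ hint
      _ = ∫ y in Set.Ioo (0:ℝ) 1, ∫ x in Set.Ioo (-1:ℝ) 1, aPs u (x, y) ^ 2 := hsw
      _ = EX := rfl
  have hmain : ∀ p ∈ G1, m * u p ^ 2
      ≤ 12 * aX u p.2 + 12 * EW + 3 * EW * (-Real.log p.2) := by
    intro p hp
    have hc : 0 ≤ -Real.log p.2 := neg_log_nonneg hp.2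
    have hRint : IntegrableOn (fun q : ℝ × ℝ =>
        6 * aX u p.2 + 3 * ((-Real.log q.2) + (-Real.log p.2)) * aW u q.1) G1 := by
      have h1 : IntegrableOn (fun _ : ℝ × ℝ => 6 * aX u p.2) G1 :=
        integrableOn_const hvolG1fin
      have heq : (fun q : ℝ × ℝ => 3 * ((-Real.log q.2) + (-Real.log p.2)) * aW u q.1)
          = fun q => 3 * (aW u q.1 * (-Real.log q.2)) + (3 * (-Real.log p.2)) * aW u q.1 := by
        funext q; ring
      have h2 : IntegrableOn (fun q : ℝ × ℝ =>
          3 * ((-Real.log q.2) + (-Real.log p.2)) * aW u q.1) G1 := by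
        rw [heq]; exact (hIWL.const_mul 3).add (hIW1.const_mul (3 * (-Real.log p.2)))
      exact h1.add h2
    have h1 : u p ^ 2 * m ≤ ∫ q in Z,
        (6 * aX u p.2 + 3 * ((-Real.log q.2) + (-Real.log p.2)) * aW u q.1) := by
      rw [mul_comm, hmdef, ← measureReal_def, ← smul_eq_mul]
      refine setIntegral_ge_of_const_le hZmeas hZfin (fun q hq => ?_) (hRint.mono_set hZsub)
      have hk := key_ineq hu hMs hMt hp (hZsub hq)
      rw [hq.2] at hk
      simpa using hk
    have h2 : (∫ q in Z, (6 * aX u p.2 + 3 * ((-Real.log q.2) + (-Real.log p.2)) * aW u q.1))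
        ≤ ∫ q in G1, (6 * aX u p.2 + 3 * ((-Real.log q.2) + (-Real.log p.2)) * aW u q.1) := by
      refine setIntegral_mono_set hRint ?_ (HasSubset.Subset.eventuallyLE hZsub)
      filter_upwards [haeG1] with q hq
      have h3 := aX_nonneg u p.2
      have h4 := aW_nonneg u q.1
      have h5 := neg_log_nonneg hq.2
      have h6 : 0 ≤ 3 * ((-Real.log q.2) + (-Real.log p.2)) * aW u q.1 :=
        mul_nonneg (mul_nonneg (by norm_num) (add_nonneg h5 hc)) h4
      simp only [Pi.zero_apply]
      linarith
    have h3 : (∫ q in G1, (6 * aX u p.2 + 3 * ((-Real.log q.2) + (-Real.log p.2)) * aW u q.1))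
        = 12 * aX u p.2 + 3 * (EW * Λ) + (3 * (-Real.log p.2)) * EW := by
      have heq : (fun q : ℝ × ℝ =>
          6 * aX u p.2 + 3 * ((-Real.log q.2) + (-Real.log p.2)) * aW u q.1)
          = fun q => (6 * aX u p.2)
            + ((3 : ℝ) * (aW u q.1 * (-Real.log q.2))
              + (3 * (-Real.log p.2)) * aW u q.1) := by
        funext q; ring
      have hcong : (∫ q in G1, (6 * aX u p.2
            + 3 * ((-Real.log q.2) + (-Real.log p.2)) * aW u q.1))
          = ∫ q in G1, ((6 * aX u p.2)
            + ((3 : ℝ) * (aW u q.1 * (-Real.log q.2))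
              + (3 * (-Real.log p.2)) * aW u q.1)) :=
        setIntegral_congr_fun hG1meas (fun q _ => by ring)
      rw [hcong]
      have ha1 : Integrable (fun q : ℝ × ℝ => (3 : ℝ) * (aW u q.1 * (-Real.log q.2)))
          (volume.restrict G1) := hIWL.const_mul 3
      have ha2 : Integrable (fun q : ℝ × ℝ => (3 * (-Real.log p.2)) * aW u q.1)
          (volume.restrict G1) := hIW1.const_mul (3 * (-Real.log p.2))
      have ha0 : Integrable (fun _ : ℝ × ℝ => 6 * aX u p.2) (volume.restrict G1) :=
        integrableOn_const hvolG1fin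
      have ha3 : Integrable (fun q : ℝ × ℝ => (3 : ℝ) * (aW u q.1 * (-Real.log q.2))
          + (3 * (-Real.log p.2)) * aW u q.1) (volume.restrict G1) := ha1.add ha2
      have e1 : (∫ q in G1, (3:ℝ) * (aW u q.1 * (-Real.log q.2))) = 3 * (EW * Λ) := by
        rw [integral_const_mul, hWLval]
      have e2 : (∫ q in G1, (3 * (-Real.log p.2)) * aW u q.1)
          = (3 * (-Real.log p.2)) * EW := by
        rw [integral_const_mul, hW1val]
      rw [integral_add ha0 ha3, integral_add ha1 ha2, e1, e2, setIntegral_const, measureReal_def, volume_G1,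
        ENNReal.toReal_ofReal (by norm_num : (0:ℝ) ≤ 2), smul_eq_mul]
      ring
    have h4 : 3 * (EW * Λ) ≤ 12 * EW := by nlinarith
    have h5 := le_trans h1 (le_trans h2 h3.le)
    nlinarith
  have hIF : IntegrableOn (fun p : ℝ × ℝ =>
      12 * aX u p.2 + 12 * EW + 3 * EW * (-Real.log p.2)) G1 := by
    exact ((hIXq.const_mul 12).add
      (integrableOn_const hvolG1fin)).add
      (hILq.const_mul (3 * EW))
  have hInt : m * ∫ q in G1, u q ^ 2
      ≤ ∫ p in G1, (12 * aX u p.2 + 12 * EW + 3 * EW * (-Real.log p.2)) := by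
    rw [← integral_const_mul]
    exact setIntegral_mono_on (hIu2.const_mul m) hIF hG1meas hmain
  have hFval : (∫ p in G1, (12 * aX u p.2 + 12 * EW + 3 * EW * (-Real.log p.2)))
      = 12 * (2 * EX) + 12 * EW * 2 + 3 * EW * (2 * Λ) := by
    have hb1 : Integrable (fun p : ℝ × ℝ => (12 : ℝ) * aX u p.2) (volume.restrict G1) :=
      hIXq.const_mul 12
    have hb2 : Integrable (fun _ : ℝ × ℝ => (12 : ℝ) * EW) (volume.restrict G1) :=
      integrableOn_const hvolG1fin
    have hb3 : Integrable (fun p : ℝ × ℝ => (3 * EW) * (-Real.log p.2)) (volume.restrict G1) :=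
      hILq.const_mul (3 * EW)
    have hb12 : Integrable (fun p : ℝ × ℝ => (12 : ℝ) * aX u p.2 + (12 : ℝ) * EW)
        (volume.restrict G1) := hb1.add hb2
    have e1 : (∫ p in G1, (12:ℝ) * aX u p.2) = 12 * (2 * EX) := by
      rw [integral_const_mul, hXval]
    have e2 : (∫ p in G1, (3 * EW) * (-Real.log p.2)) = (3 * EW) * (2 * Λ) := by
      rw [integral_const_mul, hLval]
    rw [integral_add hb12 hb3, integral_add hb1 hb2, e1, e2, setIntegral_const, measureReal_def, volume_G1,
      ENNReal.toReal_ofReal (by norm_num : (0:ℝ) ≤ 2), smul_eq_mul]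
    ring
  have hchain : m * (∫ q in G1, u q ^ 2) ≤ 48 * (EX + EW) := by
    rw [hFval] at hInt
    nlinarith
  have hu2nonneg : 0 ≤ ∫ q in G1, u q ^ 2 := setIntegral_nonneg hG1meas fun _ _ => sq_nonneg _
  have hεchain : ε * (∫ q in G1, u q ^ 2) ≤ 48 * (EX + EW) := by
    have : ε * (∫ q in G1, u q ^ 2) ≤ m * (∫ q in G1, u q ^ 2) := by nlinarith
    linarith
  have hRHS : (∫ p in G1, (p.2 * pdt u p ^ 2 + pds u p ^ 2))
      = (∫ q in G1, q.2 * aPt u q ^ 2) + ∫ q in G1, aPs u q ^ 2 := by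
    rw [setIntegral_congr_fun hG1meas (fun p hp => by
      rw [pds_eq hu hp, pdt_eq hu hp])]
    exact integral_add hIPt2w hIPs2
  rw [hRHS, hEWet, hEXes]
  rw [div_mul_eq_mul_div, le_div_iff₀ hε]
  calc (∫ p in G1, u p ^ 2) * ε = ε * ∫ p in G1, u p ^ 2 := mul_comm _ _
    _ ≤ 48 * (EX + EW) := hεchain
    _ = 48 * (EW + EX) := by ring
end

section
/- Define the transform T(s,t) = (s, 2√t) mapping a domain G ⊂ ℝ²₊ to T(G), and lift T(G) to the 3-dimensional region T̃(G) = {(s,τ,λ) ∈ ℝ³ : (s,τ) ∈ T(G), 0 < λ < τ}. Then for any p ≥ 1 and any measurable u on G, ∫_G |u|^p ds dt = (1/2) ∫_{T̃(G)} |u ∘ T⁻¹|^p ds dτ dλ, and for C¹ functions u, ∫_G (t u_t² + u_s²) ds dt = (1/2) ∫_{T̃(G)} |∇̃(u ∘ T⁻¹)|² ds dτ dλ, where ∇̃ is the full gradient in ℝ³ (in variables s, τ, λ) and u ∘ T⁻¹ is regarded as a function of (s,τ) independent of λ. -/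
open MeasureTheory
open scoped ENNReal

/-- The lifted region `T̃(G) = {(s,τ,λ) : (s,τ) ∈ T(G), 0 < λ < τ}`, where
`T(s,t) = (s, 2√t)`. -/
def liftedRegion (G : Set (ℝ × ℝ)) : Set (ℝ × ℝ × ℝ) :=
  {q | (q.1, q.2.1) ∈ (fun p : ℝ × ℝ => (p.1, 2 * Real.sqrt p.2)) '' G ∧
    0 < q.2.2 ∧ q.2.2 < q.2.1}

/-- The function `u ∘ T⁻¹` regarded as a function of `(s,τ,λ)`, constant in `λ`:
`w(s,τ,λ) = u(s, τ²/4)`. -/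
noncomputable def liftedFun (u : ℝ × ℝ → ℝ) : ℝ × ℝ × ℝ → ℝ :=
  fun q => u (q.1, q.2.1 ^ 2 / 4)

namespace Stmt2Aux

lemma lintegral_image_1d {s : Set ℝ} (hs : MeasurableSet s) {f f' : ℝ → ℝ}
    (hf' : ∀ x ∈ s, HasDerivWithinAt f (f' x) s x) (hf : Set.InjOn f s) (g : ℝ → ℝ≥0∞) :
    ∫⁻ x in f '' s, g x = ∫⁻ x in s, (ENNReal.ofReal |f' x|) * g (f x) := by
  simpa only [ContinuousLinearMap.det_toSpanSingleton] using
    lintegral_image_eq_lintegral_abs_det_fderiv_mul volume hs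
      (fun x hx => (hf' x hx).hasFDerivWithinAt) hf g

lemma injOn_T (G : Set (ℝ × ℝ)) (hG : G ⊆ {p : ℝ × ℝ | 0 < p.2}) :
    Set.InjOn (fun p : ℝ × ℝ => (p.1, 2 * Real.sqrt p.2)) G := by
  intro a ha b hb h
  simp only [Prod.mk.injEq] at h
  obtain ⟨h1, h2⟩ := h
  have h2' : Real.sqrt a.2 = Real.sqrt b.2 := by linarith
  have h3 : a.2 = b.2 := by
    rw [← Real.sq_sqrt (le_of_lt (hG ha)), ← Real.sq_sqrt (le_of_lt (hG hb)), h2']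
  exact Prod.ext h1 h3

lemma measurableSet_TG (G : Set (ℝ × ℝ)) (hG : G ⊆ {p : ℝ × ℝ | 0 < p.2})
    (hGm : MeasurableSet G) :
    MeasurableSet ((fun p : ℝ × ℝ => (p.1, 2 * Real.sqrt p.2)) '' G) :=
  hGm.image_of_continuousOn_injOn
    ((continuous_fst.prodMk ((continuous_const.mul
      (Real.continuous_sqrt.comp continuous_snd))))).continuousOn (injOn_T G hG)

lemma measurableSet_liftedRegion (G : Set (ℝ × ℝ)) (hG : G ⊆ {p : ℝ × ℝ | 0 < p.2})
    (hGm : MeasurableSet G) : MeasurableSet (liftedRegion G) := by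
  have h1 : MeasurableSet ((fun q : ℝ × ℝ × ℝ => (q.1, q.2.1)) ⁻¹'
      ((fun p : ℝ × ℝ => (p.1, 2 * Real.sqrt p.2)) '' G)) :=
    (measurableSet_TG G hG hGm).preimage
      (measurable_fst.prodMk (measurable_fst.comp measurable_snd))
  have h2 : MeasurableSet {q : ℝ × ℝ × ℝ | 0 < q.2.2} :=
    measurableSet_lt measurable_const (measurable_snd.comp measurable_snd)
  have h3 : MeasurableSet {q : ℝ × ℝ × ℝ | q.2.2 < q.2.1} :=
    measurableSet_lt (measurable_snd.comp measurable_snd) (measurable_fst.comp measurable_snd)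
  exact (h1.inter (h2.inter h3))

lemma key (G : Set (ℝ × ℝ)) (hG : G ⊆ {p : ℝ × ℝ | 0 < p.2}) (hGm : MeasurableSet G)
    (f : ℝ × ℝ → ℝ≥0∞) (hf : Measurable f) :
    ∫⁻ q in liftedRegion G, f (q.1, q.2.1) =
      2 * ∫⁻ x in G, f (x.1, 2 * Real.sqrt x.2) := by
  have hTGm : MeasurableSet ((fun p : ℝ × ℝ => (p.1, 2 * Real.sqrt p.2)) '' G) :=
    measurableSet_TG G hG hGm
  set TG : Set (ℝ × ℝ) := (fun p : ℝ × ℝ => (p.1, 2 * Real.sqrt p.2)) '' G with hTGdef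
  have hLRm : MeasurableSet (liftedRegion G) := measurableSet_liftedRegion G hG hGm
  have hFm : Measurable fun q : ℝ × ℝ × ℝ => f (q.1, q.2.1) :=
    hf.comp (measurable_fst.prodMk (measurable_fst.comp measurable_snd))
  have hGfm : Measurable fun x : ℝ × ℝ => f (x.1, 2 * Real.sqrt x.2) :=
    hf.comp (measurable_fst.prodMk
      (measurable_const.mul (Real.continuous_sqrt.measurable.comp measurable_snd)))
  -- inner (λ) integral
  have inner2 : ∀ s : ℝ, (∫⁻ y : ℝ × ℝ, (liftedRegion G).indicator
      (fun q : ℝ × ℝ × ℝ => f (q.1, q.2.1)) (s, y))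
      = ∫⁻ τ : ℝ, TG.indicator (fun p : ℝ × ℝ => ENNReal.ofReal p.2 * f p) (s, τ) := by
    intro s
    have hm2 : Measurable fun y : ℝ × ℝ => (liftedRegion G).indicator
        (fun q : ℝ × ℝ × ℝ => f (q.1, q.2.1)) (s, y) :=
      (hFm.indicator hLRm).comp measurable_prodMk_left
    rw [Measure.volume_eq_prod, lintegral_prod _ hm2.aemeasurable]
    refine lintegral_congr fun τ => ?_
    by_cases h : (s, τ) ∈ TG
    · have hτ : ∀ l : ℝ, (liftedRegion G).indicator
          (fun q : ℝ × ℝ × ℝ => f (q.1, q.2.1)) (s, τ, l)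
          = (Set.Ioo 0 τ).indicator (fun _ => f (s, τ)) l := by
        intro l
        by_cases hl : l ∈ Set.Ioo (0:ℝ) τ
        · rw [Set.indicator_of_mem hl, Set.indicator_of_mem]
          exact ⟨h, hl.1, hl.2⟩
        · rw [Set.indicator_of_notMem hl, Set.indicator_of_notMem]
          exact fun hc => hl ⟨hc.2.1, hc.2.2⟩
      rw [lintegral_congr hτ, lintegral_indicator measurableSet_Ioo, setLIntegral_const,
        Real.volume_Ioo, sub_zero, Set.indicator_of_mem h, mul_comm]
    · have hτ : ∀ l : ℝ, (liftedRegion G).indicator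
          (fun q : ℝ × ℝ × ℝ => f (q.1, q.2.1)) (s, τ, l) = 0 := by
        intro l
        exact Set.indicator_of_notMem (fun hc => h hc.1) _
      rw [lintegral_congr hτ, lintegral_zero, Set.indicator_of_notMem h]
  -- per-slice change of variables
  have slice : ∀ s : ℝ, (∫⁻ τ : ℝ, TG.indicator (fun p : ℝ × ℝ => ENNReal.ofReal p.2 * f p) (s, τ))
      = 2 * ∫⁻ t : ℝ, G.indicator (fun x : ℝ × ℝ => f (x.1, 2 * Real.sqrt x.2)) (s, t) := by
    intro s
    set Gs : Set ℝ := Prod.mk s ⁻¹' G with hGs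
    have hGsm : MeasurableSet Gs := measurable_prodMk_left hGm
    have hsub : ∀ t ∈ Gs, 0 < t := fun t ht => hG ht
    have himg : (fun t => 2 * Real.sqrt t) '' Gs = Prod.mk s ⁻¹' TG := by
      ext τ
      constructor
      · rintro ⟨t, ht, rfl⟩
        exact ⟨(s, t), ht, rfl⟩
      · rintro ⟨p, hp, hpe⟩
        simp only [Prod.mk.injEq] at hpe
        refine ⟨p.2, ?_, hpe.2⟩
        show (s, p.2) ∈ G
        rw [← hpe.1]
        exact hp
    have e1 : ∀ τ : ℝ, TG.indicator (fun p : ℝ × ℝ => ENNReal.ofReal p.2 * f p) (s, τ)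
        = (Prod.mk s ⁻¹' TG).indicator (fun τ => ENNReal.ofReal τ * f (s, τ)) τ := by
      intro τ
      by_cases h : (s, τ) ∈ TG
      · rw [Set.indicator_of_mem h, Set.indicator_of_mem (show τ ∈ Prod.mk s ⁻¹' TG from h)]
      · rw [Set.indicator_of_notMem h,
          Set.indicator_of_notMem (show τ ∉ Prod.mk s ⁻¹' TG from h)]
    have hderiv : ∀ t ∈ Gs, HasDerivWithinAt (fun t => 2 * Real.sqrt t) (1 / Real.sqrt t) Gs t := by
      intro t ht
      have h0 : (t : ℝ) ≠ 0 := ne_of_gt (hsub t ht)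
      have hs0 : Real.sqrt t ≠ 0 := by
        simpa [Real.sqrt_eq_zero (le_of_lt (hsub t ht))] using h0
      have hd := (Real.hasDerivAt_sqrt h0).const_mul 2
      have he : 2 * (1 / (2 * Real.sqrt t)) = 1 / Real.sqrt t := by
        field_simp
      rw [he] at hd
      exact hd.hasDerivWithinAt
    have hinj : Set.InjOn (fun t => 2 * Real.sqrt t) Gs := by
      intro a ha b hb h
      have h2 : Real.sqrt a = Real.sqrt b := by
        have : 2 * Real.sqrt a = 2 * Real.sqrt b := h
        linarith
      rw [← Real.sq_sqrt (hsub a ha).le, ← Real.sq_sqrt (hsub b hb).le, h2]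
    rw [lintegral_congr e1, lintegral_indicator (measurable_prodMk_left hTGm), ← himg,
      lintegral_image_1d hGsm hderiv hinj]
    have e2 : ∀ᵐ t : ℝ, t ∈ Gs →
        (ENNReal.ofReal |1 / Real.sqrt t|) * (ENNReal.ofReal (2 * Real.sqrt t) * f (s, 2 * Real.sqrt t))
        = 2 * f (s, 2 * Real.sqrt t) := by
      refine Filter.Eventually.of_forall fun t ht => ?_
      have h0 : 0 < Real.sqrt t := Real.sqrt_pos.2 (hsub t ht)
      rw [abs_of_pos (by positivity), ← mul_assoc, ← ENNReal.ofReal_mul (by positivity)]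
      have : 1 / Real.sqrt t * (2 * Real.sqrt t) = 2 := by
        field_simp
      rw [this]
      norm_num
    rw [setLIntegral_congr_fun_ae hGsm e2, lintegral_const_mul' 2 _ (by norm_num),
      ← lintegral_indicator hGsm]
    refine congrArg (2 * ·) (lintegral_congr fun t => ?_)
    by_cases h : (s, t) ∈ G
    · rw [Set.indicator_of_mem (show t ∈ Gs from h), Set.indicator_of_mem h]
    · rw [Set.indicator_of_notMem (show t ∉ Gs from h), Set.indicator_of_notMem h]
  calc ∫⁻ q in liftedRegion G, f (q.1, q.2.1)
      = ∫⁻ q : ℝ × ℝ × ℝ, (liftedRegion G).indicator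
          (fun q : ℝ × ℝ × ℝ => f (q.1, q.2.1)) q := (lintegral_indicator hLRm _).symm
    _ = ∫⁻ s : ℝ, ∫⁻ y : ℝ × ℝ, (liftedRegion G).indicator
          (fun q : ℝ × ℝ × ℝ => f (q.1, q.2.1)) (s, y) := by
        rw [Measure.volume_eq_prod, lintegral_prod _ (hFm.indicator hLRm).aemeasurable]
    _ = ∫⁻ s : ℝ, 2 * ∫⁻ t : ℝ, G.indicator
          (fun x : ℝ × ℝ => f (x.1, 2 * Real.sqrt x.2)) (s, t) := by
        refine lintegral_congr fun s => ?_
        rw [inner2 s, slice s]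
    _ = 2 * ∫⁻ s : ℝ, ∫⁻ t : ℝ, G.indicator
          (fun x : ℝ × ℝ => f (x.1, 2 * Real.sqrt x.2)) (s, t) :=
        lintegral_const_mul' 2 _ (by norm_num)
    _ = 2 * ∫⁻ x in G, f (x.1, 2 * Real.sqrt x.2) := by
        rw [← lintegral_indicator hGm, Measure.volume_eq_prod,
          lintegral_prod _ (hGfm.indicator hGm).aemeasurable]

lemma pds_eq {u : ℝ × ℝ → ℝ} (hu : Differentiable ℝ u) :
    ∀ p : ℝ × ℝ, pds u p = fderiv ℝ u p (1, 0) := by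
  intro p
  have hline : HasDerivAt (fun x : ℝ => (x, p.2)) ((1 : ℝ), (0 : ℝ)) p.1 :=
    HasDerivAt.prodMk (hasDerivAt_id p.1) (hasDerivAt_const p.1 p.2)
  have h1 : HasDerivAt (fun x => u (x, p.2)) (fderiv ℝ u p (1, 0)) p.1 :=
    (hu p).hasFDerivAt.comp_hasDerivAt p.1 hline
  exact h1.deriv

lemma pdt_eq {u : ℝ × ℝ → ℝ} (hu : Differentiable ℝ u) :
    ∀ p : ℝ × ℝ, pdt u p = fderiv ℝ u p (0, 1) := by
  intro p
  have hline : HasDerivAt (fun y : ℝ => (p.1, y)) ((0 : ℝ), (1 : ℝ)) p.2 :=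
    HasDerivAt.prodMk (hasDerivAt_const p.2 p.1) (hasDerivAt_id p.2)
  have h1 : HasDerivAt (fun y => u (p.1, y)) (fderiv ℝ u p (0, 1)) p.2 :=
    (hu p).hasFDerivAt.comp_hasDerivAt p.2 hline
  exact h1.deriv

lemma fderiv_liftedFun {u : ℝ × ℝ → ℝ} (hu : ContDiff ℝ 1 u) (q : ℝ × ℝ × ℝ) :
    fderiv ℝ (liftedFun u) q (1, 0, 0) = pds u (q.1, q.2.1 ^ 2 / 4) ∧
    fderiv ℝ (liftedFun u) q (0, 1, 0) = q.2.1 / 2 * pdt u (q.1, q.2.1 ^ 2 / 4) ∧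
    fderiv ℝ (liftedFun u) q (0, 0, 1) = 0 := by
  have hud : Differentiable ℝ u := hu.differentiable one_ne_zero
  set M : (ℝ × ℝ × ℝ) →L[ℝ] ℝ :=
    (ContinuousLinearMap.fst ℝ ℝ ℝ).comp (ContinuousLinearMap.snd ℝ ℝ (ℝ × ℝ)) with hM
  have hM21 : HasFDerivAt (fun q : ℝ × ℝ × ℝ => q.2.1) M q :=
    hasFDerivAt_fst.comp q hasFDerivAt_snd
  have hg : HasDerivAt (fun x : ℝ => x ^ 2 / 4) (q.2.1 / 2) q.2.1 := by
    have h := (hasDerivAt_pow 2 q.2.1).div_const 4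
    refine h.congr_deriv ?_
    push_cast
    ring
  have hb : HasFDerivAt (fun q : ℝ × ℝ × ℝ => q.2.1 ^ 2 / 4) ((q.2.1 / 2) • M) q :=
    hg.comp_hasFDerivAt (h₂ := fun x : ℝ => x ^ 2 / 4) q hM21
  have hφ : HasFDerivAt (fun q : ℝ × ℝ × ℝ => (q.1, q.2.1 ^ 2 / 4))
      ((ContinuousLinearMap.fst ℝ ℝ (ℝ × ℝ)).prod ((q.2.1 / 2) • M)) q :=
    hasFDerivAt_fst.prodMk hb
  have hw : HasFDerivAt (liftedFun u)
      ((fderiv ℝ u (q.1, q.2.1 ^ 2 / 4)).comp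
        ((ContinuousLinearMap.fst ℝ ℝ (ℝ × ℝ)).prod ((q.2.1 / 2) • M))) q :=
    (hud (q.1, q.2.1 ^ 2 / 4)).hasFDerivAt.comp q hφ
  rw [hw.fderiv]
  refine ⟨?_, ?_, ?_⟩
  · simp only [ContinuousLinearMap.coe_comp', Function.comp_apply,
      ContinuousLinearMap.prod_apply, ContinuousLinearMap.coe_fst',
      ContinuousLinearMap.coe_smul', Pi.smul_apply, hM,
      ContinuousLinearMap.coe_snd', smul_eq_mul, mul_zero]
    rw [pds_eq hud]
  · simp only [ContinuousLinearMap.coe_comp', Function.comp_apply,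
      ContinuousLinearMap.prod_apply, ContinuousLinearMap.coe_fst',
      ContinuousLinearMap.coe_smul', Pi.smul_apply, hM,
      ContinuousLinearMap.coe_snd', smul_eq_mul, mul_one]
    rw [pdt_eq hud, show ((0 : ℝ), q.2.1 / 2) = (q.2.1 / 2) • ((0 : ℝ), (1 : ℝ)) by simp,
      _root_.map_smul, smul_eq_mul]
  · simp only [ContinuousLinearMap.coe_comp', Function.comp_apply,
      ContinuousLinearMap.prod_apply, ContinuousLinearMap.coe_fst',
      ContinuousLinearMap.coe_smul', Pi.smul_apply, hM,
      ContinuousLinearMap.coe_snd', smul_eq_mul, mul_zero]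
    rw [show ((0 : ℝ), (0 : ℝ)) = ((0 : ℝ × ℝ)) by simp, map_zero]

end Stmt2Aux

open Stmt2Aux

/-- The raising-dimension identities: for `G ⊆ ℝ²₊` and the transform `T(s,t) = (s, 2√t)`,
`∫_G |u|^p = ½ ∫_{T̃(G)} |u∘T⁻¹|^p` for `p ≥ 1`, and for `C¹` functions
`∫_G (t u_t² + u_s²) = ½ ∫_{T̃(G)} |∇̃(u∘T⁻¹)|²` with the full gradient in `ℝ³`. -/
theorem stmt2 (G : Set (ℝ × ℝ)) (hG : G ⊆ {p : ℝ × ℝ | 0 < p.2})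
    (hGm : MeasurableSet G) (u : ℝ × ℝ → ℝ) (hu : Measurable u) :
    (∀ p : ℝ, 1 ≤ p →
      ∫ x in G, |u x| ^ p = (1 / 2) * ∫ q in liftedRegion G, |liftedFun u q| ^ p) ∧
    (ContDiff ℝ 1 u →
      ∫ x in G, (x.2 * (pdt u x) ^ 2 + (pds u x) ^ 2) =
        (1 / 2) * ∫ q in liftedRegion G,
          ((fderiv ℝ (liftedFun u) q (1, 0, 0)) ^ 2 +
            (fderiv ℝ (liftedFun u) q (0, 1, 0)) ^ 2 +
            (fderiv ℝ (liftedFun u) q (0, 0, 1)) ^ 2)) := by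
  constructor
  · -- Part 1
    intro p hp
    have hp0 : (0 : ℝ) ≤ p := by linarith
    have hrpow : Continuous fun x : ℝ => x ^ p := Real.continuous_rpow_const hp0
    have hum : Measurable fun x : ℝ × ℝ => |u x| ^ p :=
      hrpow.measurable.comp hu.abs
    have hlm : Measurable (liftedFun u) :=
      hu.comp (measurable_fst.prodMk ((measurable_fst.comp measurable_snd).pow_const 2
        |>.div_const 4))
    have hlum : Measurable fun q : ℝ × ℝ × ℝ => |liftedFun u q| ^ p :=
      hrpow.measurable.comp hlm.abs
    have h1 : ∫ x in G, |u x| ^ p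
        = (∫⁻ x in G, ENNReal.ofReal (|u x| ^ p)).toReal := by
      rw [integral_eq_lintegral_of_nonneg_ae
        (Filter.Eventually.of_forall fun x => Real.rpow_nonneg (abs_nonneg _) p)
        hum.aestronglyMeasurable]
    have h2 : ∫ q in liftedRegion G, |liftedFun u q| ^ p
        = (∫⁻ q in liftedRegion G, ENNReal.ofReal (|liftedFun u q| ^ p)).toReal := by
      rw [integral_eq_lintegral_of_nonneg_ae
        (Filter.Eventually.of_forall fun q => Real.rpow_nonneg (abs_nonneg _) p)
        hlum.aestronglyMeasurable]
    rw [h1, h2]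
    have hfm : Measurable fun pr : ℝ × ℝ => ENNReal.ofReal (|u (pr.1, pr.2 ^ 2 / 4)| ^ p) :=
      ENNReal.measurable_ofReal.comp (hrpow.measurable.comp
        ((hu.comp (measurable_fst.prodMk ((measurable_snd.pow_const 2).div_const 4))).abs))
    have h3 : ∫⁻ q in liftedRegion G, ENNReal.ofReal (|liftedFun u q| ^ p)
        = 2 * ∫⁻ x in G, ENNReal.ofReal (|u x| ^ p) := by
      have hk := key G hG hGm
        (fun pr : ℝ × ℝ => ENNReal.ofReal (|u (pr.1, pr.2 ^ 2 / 4)| ^ p)) hfm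
      rw [show (∫⁻ q in liftedRegion G, ENNReal.ofReal (|liftedFun u q| ^ p))
          = ∫⁻ q in liftedRegion G,
            (fun pr : ℝ × ℝ => ENNReal.ofReal (|u (pr.1, pr.2 ^ 2 / 4)| ^ p)) (q.1, q.2.1)
          from rfl, hk]
      congr 1
      refine setLIntegral_congr_fun_ae hGm (Filter.Eventually.of_forall fun x hx => ?_)
      have hx2 : (0 : ℝ) < x.2 := hG hx
      have : (2 * Real.sqrt x.2) ^ 2 / 4 = x.2 := by
        rw [mul_pow, Real.sq_sqrt hx2.le]
        ring
      simp only [this]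
    rw [h3, ENNReal.toReal_mul]
    simp only [ENNReal.toReal_ofNat]
    ring
  · -- Part 2
    intro hC1
    have hud : Differentiable ℝ u := hC1.differentiable one_ne_zero
    have hfc : Continuous (fderiv ℝ u) := hC1.continuous_fderiv one_ne_zero
    have hpds_c : Continuous (pds u) := by
      rw [show pds u = fun p => fderiv ℝ u p (1, 0) from funext (pds_eq hud)]
      exact hfc.clm_apply continuous_const
    have hpdt_c : Continuous (pdt u) := by
      rw [show pdt u = fun p => fderiv ℝ u p (0, 1) from funext (pdt_eq hud)]
      exact hfc.clm_apply continuous_const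
    have hrw : ∀ q : ℝ × ℝ × ℝ,
        (fderiv ℝ (liftedFun u) q (1, 0, 0)) ^ 2 +
          (fderiv ℝ (liftedFun u) q (0, 1, 0)) ^ 2 +
          (fderiv ℝ (liftedFun u) q (0, 0, 1)) ^ 2
        = (pds u (q.1, q.2.1 ^ 2 / 4)) ^ 2
          + (q.2.1 / 2 * pdt u (q.1, q.2.1 ^ 2 / 4)) ^ 2 := by
      intro q
      obtain ⟨e1, e2, e3⟩ := fderiv_liftedFun hC1 q
      rw [e1, e2, e3]
      ring
    have hgc : Continuous fun pr : ℝ × ℝ =>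
        (pds u (pr.1, pr.2 ^ 2 / 4)) ^ 2 + (pr.2 / 2 * pdt u (pr.1, pr.2 ^ 2 / 4)) ^ 2 := by
      have hin : Continuous fun pr : ℝ × ℝ => ((pr.1, pr.2 ^ 2 / 4) : ℝ × ℝ) :=
        continuous_fst.prodMk (((continuous_snd.pow 2).div_const 4))
      exact ((hpds_c.comp hin).pow 2).add
        (((continuous_snd.div_const 2).mul (hpdt_c.comp hin)).pow 2)
    have h1 : ∫ x in G, (x.2 * (pdt u x) ^ 2 + (pds u x) ^ 2)
        = (∫⁻ x in G, ENNReal.ofReal (x.2 * (pdt u x) ^ 2 + (pds u x) ^ 2)).toReal := by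
      rw [integral_eq_lintegral_of_nonneg_ae]
      · exact (ae_restrict_iff' hGm).2 (Filter.Eventually.of_forall fun x hx =>
          add_nonneg (mul_nonneg (le_of_lt (hG hx)) (sq_nonneg _)) (sq_nonneg _))
      · exact ((continuous_snd.mul (hpdt_c.pow 2)).add (hpds_c.pow 2)).aestronglyMeasurable
    have h2 : ∫ q in liftedRegion G,
        ((fderiv ℝ (liftedFun u) q (1, 0, 0)) ^ 2 +
          (fderiv ℝ (liftedFun u) q (0, 1, 0)) ^ 2 +
          (fderiv ℝ (liftedFun u) q (0, 0, 1)) ^ 2)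
        = (∫⁻ q in liftedRegion G, ENNReal.ofReal
            ((pds u (q.1, q.2.1 ^ 2 / 4)) ^ 2
              + (q.2.1 / 2 * pdt u (q.1, q.2.1 ^ 2 / 4)) ^ 2)).toReal := by
      have hstrong : AEStronglyMeasurable (fun q : ℝ × ℝ × ℝ =>
          (pds u (q.1, q.2.1 ^ 2 / 4)) ^ 2 + (q.2.1 / 2 * pdt u (q.1, q.2.1 ^ 2 / 4)) ^ 2)
          (volume.restrict (liftedRegion G)) :=
        (hgc.comp (continuous_fst.prodMk
          (continuous_fst.comp continuous_snd))).aestronglyMeasurable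
      simp only [hrw]
      rw [integral_eq_lintegral_of_nonneg_ae
        (Filter.Eventually.of_forall fun q => add_nonneg (sq_nonneg _) (sq_nonneg _))
        hstrong]
    rw [h1, h2]
    have h3 : ∫⁻ q in liftedRegion G, ENNReal.ofReal
          ((pds u (q.1, q.2.1 ^ 2 / 4)) ^ 2 + (q.2.1 / 2 * pdt u (q.1, q.2.1 ^ 2 / 4)) ^ 2)
        = 2 * ∫⁻ x in G, ENNReal.ofReal (x.2 * (pdt u x) ^ 2 + (pds u x) ^ 2) := by
      have hk := key G hG hGm
        (fun pr : ℝ × ℝ => ENNReal.ofReal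
          ((pds u (pr.1, pr.2 ^ 2 / 4)) ^ 2 + (pr.2 / 2 * pdt u (pr.1, pr.2 ^ 2 / 4)) ^ 2))
        (ENNReal.measurable_ofReal.comp hgc.measurable)
      rw [show (∫⁻ q in liftedRegion G, ENNReal.ofReal
            ((pds u (q.1, q.2.1 ^ 2 / 4)) ^ 2 + (q.2.1 / 2 * pdt u (q.1, q.2.1 ^ 2 / 4)) ^ 2))
          = ∫⁻ q in liftedRegion G, (fun pr : ℝ × ℝ => ENNReal.ofReal
            ((pds u (pr.1, pr.2 ^ 2 / 4)) ^ 2 + (pr.2 / 2 * pdt u (pr.1, pr.2 ^ 2 / 4)) ^ 2))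
            (q.1, q.2.1) from rfl, hk]
      congr 1
      refine setLIntegral_congr_fun_ae hGm (Filter.Eventually.of_forall fun x hx => ?_)
      have hx2 : (0 : ℝ) < x.2 := hG hx
      have e1 : (2 * Real.sqrt x.2) ^ 2 / 4 = x.2 := by
        rw [mul_pow, Real.sq_sqrt hx2.le]
        ring
      have e2 : 2 * Real.sqrt x.2 / 2 = Real.sqrt x.2 := by ring
      simp only [e1, e2, Prod.mk.eta]
      congr 1
      rw [mul_pow, Real.sq_sqrt hx2.le]
      ring
    rw [h3, ENNReal.toReal_mul]
    simp only [ENNReal.toReal_ofNat]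
    ring
end

section
/- Let Σ be an oriented C⁴ surface in ℝ³ whose Gauss curvature K vanishes along a boundary component σ, with ∇K ≠ 0 on σ, and suppose the unit normal of Σ is constant along σ (σ is a planar curve tangent to Σ). In geodesic coordinates (s,t) with base curve σ where the metric is g = B² ds² + dt² with B(·,0) = 1 and B_t(·,0) = -k_g > 0, the coefficients L, M, N of the second fundamental form satisfy on t = 0: L = M = 0, N = √(K_t / B_t), and L_t = √(K_t B_t). -/
/-- Boundary values of the second fundamental form for an Alexandrov–Nirenberg type
surface in geodesic coordinates: if the Gauss–Codazzi equations hold, `K = L = M = 0`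
on `t = 0`, `K_t > 0`, `B_t > 0`, `B = 1` and `N > 0` on `t = 0`, then on `t = 0`
one has `N = √(K_t/B_t)` and `L_t = √(K_t B_t)`. -/
theorem stmt3 (B K L M N : ℝ × ℝ → ℝ)
    (hB : ContDiff ℝ 2 B) (hK : ContDiff ℝ 2 K) (hL : ContDiff ℝ 2 L)
    (hM : ContDiff ℝ 2 M) (hN : ContDiff ℝ 2 N)
    (hBpos : ∀ p : ℝ × ℝ, 0 < B p)
    (hB0 : ∀ s : ℝ, B (s, 0) = 1) (hBt0 : ∀ s : ℝ, 0 < pdt B (s, 0))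
    (hK0 : ∀ s : ℝ, K (s, 0) = 0) (hKt0 : ∀ s : ℝ, 0 < pdt K (s, 0))
    (hL0 : ∀ s : ℝ, L (s, 0) = 0) (hM0 : ∀ s : ℝ, M (s, 0) = 0)
    (hN0 : ∀ s : ℝ, 0 < N (s, 0))
    (hGC1 : ∀ p : ℝ × ℝ, pdt L p - pds M p =
      (pdt B p / B p) * L p - (pds B p / B p) * M p + B p * pdt B p * N p)
    (hGC2 : ∀ p : ℝ × ℝ, pdt M p - pds N p = -(pdt B p / B p) * M p)
    (hGC3 : ∀ p : ℝ × ℝ, N p * L p - (M p) ^ 2 = K p * (B p) ^ 2) :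
    ∀ s : ℝ,
      L (s, 0) = 0 ∧ M (s, 0) = 0 ∧
      N (s, 0) = Real.sqrt (pdt K (s, 0) / pdt B (s, 0)) ∧
      pdt L (s, 0) = Real.sqrt (pdt K (s, 0) * pdt B (s, 0)) := by
  intro s
  have hdiff : ∀ (u : ℝ × ℝ → ℝ), ContDiff ℝ 2 u →
      HasDerivAt (fun y => u (s, y)) (pdt u (s, 0)) 0 := by
    intro u hu
    have : DifferentiableAt ℝ (fun y => u (s, y)) 0 :=
      (hu.differentiable (by norm_num) (s, 0)).comp 0
        (DifferentiableAt.prodMk (differentiableAt_const s) differentiableAt_id)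
    exact this.hasDerivAt
  have hB' := hdiff B hB
  have hK' := hdiff K hK
  have hL' := hdiff L hL
  have hM' := hdiff M hM
  have hN' := hdiff N hN
  -- derivative of the Gauss equation
  have H1 : HasDerivAt (fun y => N (s, y) * L (s, y) - (M (s, y)) ^ 2)
      (pdt N (s,0) * L (s,0) + N (s,0) * pdt L (s,0)
        - (2 : ℕ) * M (s,0) ^ 1 * pdt M (s,0)) 0 := (hN'.mul hL').sub (hM'.pow 2)
  have H2 : HasDerivAt (fun y => K (s, y) * (B (s, y)) ^ 2)
      (pdt K (s,0) * (B (s,0)) ^ 2 + K (s,0) * ((2 : ℕ) * B (s,0) ^ 1 * pdt B (s,0))) 0 :=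
    hK'.mul (hB'.pow 2)
  have heq : (fun y => N (s, y) * L (s, y) - (M (s, y)) ^ 2)
      = fun y => K (s, y) * (B (s, y)) ^ 2 := funext fun y => hGC3 (s, y)
  rw [heq] at H1
  have key := H1.unique H2
  rw [hL0 s, hM0 s, hK0 s, hB0 s] at key
  have keyNL : N (s,0) * pdt L (s,0) = pdt K (s,0) := by linarith [key]
  -- Codazzi equation at t = 0
  have hMs : pds M (s, 0) = 0 := by
    have h1 : pds M (s, 0) = deriv (fun x => M (x, (0:ℝ))) s := rfl
    rw [h1, show (fun x => M (x, (0:ℝ))) = fun _ => (0:ℝ) from funext fun x => hM0 x]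
    exact deriv_const s 0
  have hC := hGC1 (s, 0)
  rw [hL0 s, hM0 s, hB0 s, hMs] at hC
  have hLt : pdt L (s, 0) = pdt B (s, 0) * N (s, 0) := by
    rw [show pdt L (s,0) = pdt L (s,0) - 0 by ring, hC]; ring
  have hNsq : N (s, 0) ^ 2 = pdt K (s, 0) / pdt B (s, 0) := by
    field_simp [(hBt0 s).ne']
    rw [← keyNL, hLt]; ring
  have hNpos := hN0 s
  refine ⟨hL0 s, hM0 s, ?_, ?_⟩
  · rw [← hNsq, Real.sqrt_sq hNpos.le]
  · have : pdt L (s, 0) ^ 2 = pdt K (s, 0) * pdt B (s, 0) := by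
      rw [hLt, ← keyNL, hLt]; ring
    rw [← this, Real.sqrt_sq]
    rw [hLt]; exact mul_nonneg (hBt0 s).le (hN0 s).le
end
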